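/- arXiv:2105.10225 — 2 statements merged into one kernel-verified Lean document; each statement's English description precedes it below -/
import Mathlib

section
/- Let D be a finite directed graph and T a spanning tree of its underlying undirected graph. For each non-tree arc a = (i,j), let C_a denote the edge set of the unique cycle formed by a together with the tree path from j to i. Then every cycle C_D of the underlying undirected graph of D (viewed as an edge set) equals the iterated symmetric difference of the edge sets C_a over all non-tree arcs a ∈ C_D ∖ T. -/
open scoped Classical
noncomputable section

/-- A network: finite directed graph with arc set `A`, lower/upper capacities `l`, `u`,
node balances `b` and arc costs `c`. -/
structure Network (V : Type) [Fintype V] [DecidableEq V] where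
  A : Finset (V × V)
  l : V × V → ℤ
  u : V × V → ℤ
  b : V → ℤ
  c : V × V → ℝ

variable {V : Type} [Fintype V] [DecidableEq V]

namespace Network

/-- No anti-parallel arcs, and `0 ≤ l ≤ u` on every arc. -/
def Wellformed (N : Network V) : Prop :=
  (∀ a ∈ N.A, (a.2, a.1) ∉ N.A) ∧ ∀ a ∈ N.A, 0 ≤ N.l a ∧ N.l a ≤ N.u a

/-- A feasible integer flow: capacity constraints, vanishing outside `A`, flow balance. -/
def Feasible (N : Network V) (f : V × V → ℤ) : Prop :=
  (∀ a ∈ N.A, N.l a ≤ f a ∧ f a ≤ N.u a) ∧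
  (∀ a, a ∉ N.A → f a = 0) ∧
  ∀ i : V, ((∑ a ∈ N.A.filter fun a => a.1 = i, f a)
         - ∑ a ∈ N.A.filter fun a => a.2 = i, f a) = N.b i

/-- The cost of a flow. -/
def cost (N : Network V) (f : V × V → ℤ) : ℝ := ∑ a ∈ N.A, N.c a * (f a : ℝ)

/-- A flow is optimal if it is feasible of minimum cost. -/
def Optimal (N : Network V) (f : V × V → ℤ) : Prop :=
  N.Feasible f ∧ ∀ g, N.Feasible g → N.cost f ≤ N.cost g

/-- The arc set `A_f` of the residual graph `D_f`. -/
def resArcs (N : Network V) (f : V × V → ℤ) : Finset (V × V) :=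
  N.A.filter (fun a => f a < N.u a) ∪ (N.A.filter fun a => N.l a < f a).image Prod.swap

/-- Residual cost of a residual arc: `c_{ij}` on forward arcs, `-c_{ji}` on backward arcs. -/
def resCost (N : Network V) (a : V × V) : ℝ :=
  if a ∈ N.A then N.c a else -N.c (a.2, a.1)

/-- Residual capacity of a residual arc. -/
def resCap (N : Network V) (f : V × V → ℤ) (a : V × V) : ℤ :=
  if a ∈ N.A then N.u a - f a else f (a.2, a.1) - N.l (a.2, a.1)

/-- Reduced cost of an arc of `A` w.r.t. node potentials `y`. -/
def redCost (N : Network V) (y : V → ℝ) (a : V × V) : ℝ := N.c a + y a.1 - y a.2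

/-- Residual reduced cost of a residual arc w.r.t. node potentials `y`. -/
def resRedCost (N : Network V) (y : V → ℝ) (a : V × V) : ℝ := N.resCost a + y a.1 - y a.2

/-- `y` is an optimal node potential for `f`. -/
def OptPotential (N : Network V) (f : V × V → ℤ) (y : V → ℝ) : Prop :=
  ∀ a ∈ N.resArcs f, 0 ≤ N.resRedCost y a

end Network

/-- A (simple, directed) cycle: a nonempty duplicate-free list of at least two vertices,
traversed cyclically. -/
structure Cyc (V : Type) where
  verts : List V
  nodup : verts.Nodup
  two_le : 2 ≤ verts.length

/-- The arcs of a cycle: consecutive (cyclic) pairs of vertices. -/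
def Cyc.arcs (C : Cyc V) : Finset (V × V) :=
  (C.verts.zip (C.verts.rotate 1)).toFinset

/-- A cycle is proper if it contains no pair of anti-parallel arcs. -/
def Cyc.Proper (C : Cyc V) : Prop := ∀ a ∈ C.arcs, (a.2, a.1) ∉ C.arcs

/-- The incidence vector `χ(C)` of a cycle. -/
def Cyc.chi (C : Cyc V) : V × V → ℤ :=
  fun a => if a ∈ C.arcs then 1 else if (a.2, a.1) ∈ C.arcs then -1 else 0

namespace Network

/-- `C` is a directed cycle of the residual graph `D_f`. -/
def IsResCycle (N : Network V) (f : V × V → ℤ) (C : Cyc V) : Prop :=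
  ∀ a ∈ C.arcs, a ∈ N.resArcs f

/-- The cost `c(f,C)` of a cycle in the residual graph. -/
def cycCost (N : Network V) (C : Cyc V) : ℝ := ∑ a ∈ C.arcs, N.resCost a

end Network

/-- The consecutive (cyclic) pairs of a list of vertices. -/
def cyclePairs (vs : List V) : List (V × V) := vs.zip (vs.rotate 1)

/-- `C` is the edge set of a cycle of the underlying undirected graph of the digraph with
arc set `A`: the arcs of `A` whose underlying edges are the consecutive (cyclic) pairs of
a duplicate-free list of at least three vertices. -/
def IsUCycle (A C : Finset (V × V)) : Prop :=
  ∃ vs : List V, vs.Nodup ∧ 3 ≤ vs.length ∧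
    (∀ p ∈ cyclePairs vs, p ∈ A ∨ p.swap ∈ A) ∧
    C = A.filter fun a => a ∈ cyclePairs vs ∨ a.swap ∈ cyclePairs vs

/-- `T ⊆ A` is a spanning tree of the underlying undirected graph: it connects all
vertices and has `|V| - 1` edges. -/
def IsSpanningTree (A T : Finset (V × V)) : Prop :=
  T ⊆ A ∧ (∀ u v : V, Relation.ReflTransGen (fun x y => (x, y) ∈ T ∨ (y, x) ∈ T) u v) ∧
    T.card + 1 = Fintype.card V

/-- `C` is the unique (fundamental) cycle induced by the non-tree arc `a`: the cycle
consisting of `a` together with tree edges only. -/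
def IsFundCycle (A T : Finset (V × V)) (a : V × V) (C : Finset (V × V)) : Prop :=
  IsUCycle A C ∧ a ∈ C ∧ C \ {a} ⊆ T

instance symmDiffComm : Std.Commutative fun s t : Finset (V × V) => symmDiff s t :=
  ⟨fun _ _ => symmDiff_comm _ _⟩

instance symmDiffAssoc : Std.Associative fun s t : Finset (V × V) => symmDiff s t :=
  ⟨fun _ _ _ => symmDiff_assoc _ _ _⟩

/-- The iterated symmetric difference (composition `∘` of the paper) of the edge sets
`Ca a` over `a ∈ S`. -/
def foldSymmDiff (S : Finset (V × V)) (Ca : V × V → Finset (V × V)) : Finset (V × V) :=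
  S.fold (fun s t => symmDiff s t) ∅ Ca


/-! ### Auxiliary machinery for the fundamental-cycle decomposition -/

namespace CycSpaceAux

/-- Degree of a vertex in an arc set, counted in `ZMod 2`. -/
def deg2 (S : Finset (V × V)) (v : V) : ZMod 2 :=
  ∑ a ∈ S, ((if a.1 = v then 1 else 0) + (if a.2 = v then 1 else 0))

lemma zmod2_add_self (x : ZMod 2) : x + x = 0 := by
  have h2 : (2 : ZMod 2) = 0 := rfl
  calc x + x = 2 * x := by ring
    _ = 0 := by rw [h2, zero_mul]

lemma deg2_symmDiff (P Q : Finset (V × V)) (v : V) :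
    deg2 (symmDiff P Q) v = deg2 P v + deg2 Q v := by
  classical
  set f : V × V → ZMod 2 :=
    fun a => (if a.1 = v then 1 else 0) + (if a.2 = v then 1 else 0) with hf
  have hP : deg2 P v = ∑ a ∈ P \ Q, f a + ∑ a ∈ P ∩ Q, f a := by
    rw [deg2, ← Finset.sum_sdiff (Finset.inter_subset_left (s₁ := P) (s₂ := Q)),
      Finset.sdiff_inter_self_left]
  have hQ : deg2 Q v = ∑ a ∈ Q \ P, f a + ∑ a ∈ Q ∩ P, f a := by
    rw [deg2, ← Finset.sum_sdiff (Finset.inter_subset_left (s₁ := Q) (s₂ := P)),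
      Finset.sdiff_inter_self_left]
  have hsd : deg2 (symmDiff P Q) v = ∑ a ∈ P \ Q, f a + ∑ a ∈ Q \ P, f a := by
    rw [deg2, show symmDiff P Q = (P \ Q) ∪ (Q \ P) from rfl,
      Finset.sum_union disjoint_sdiff_sdiff]
  have hinter : ∑ a ∈ Q ∩ P, f a = ∑ a ∈ P ∩ Q, f a := by rw [Finset.inter_comm]
  rw [hsd, hP, hQ, hinter]
  have hz := zmod2_add_self (∑ a ∈ P ∩ Q, f a)
  linear_combination -hz

/-- `(k+1) % n` explicitly. -/
lemma succ_mod {k n : ℕ} (hk : k < n) : (k + 1) % n = if k + 1 = n then 0 else k + 1 := by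
  split
  · next h => rw [h, Nat.mod_self]
  · next h => exact Nat.mod_eq_of_lt (by omega)

lemma cyclePairs_length (vs : List V) : (cyclePairs vs).length = vs.length := by
  simp [cyclePairs]

lemma cyclePairs_getElem (vs : List V) (k : ℕ) (hk : k < (cyclePairs vs).length) :
    (cyclePairs vs)[k] =
      (vs[k]'(by simpa [cyclePairs_length] using hk),
       vs[(k + 1) % vs.length]'
         (Nat.mod_lt _ (by rw [cyclePairs_length] at hk; omega))) := by
  have hk' : k < vs.length := by simpa [cyclePairs_length] using hk
  simp only [cyclePairs, List.getElem_zip]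
  congr 1
  rw [List.getElem_rotate]

lemma mem_cyclePairs {vs : List V} {p : V × V} :
    p ∈ cyclePairs vs ↔ ∃ k, ∃ hk : k < vs.length,
      p = (vs[k], vs[(k + 1) % vs.length]'(Nat.mod_lt _ (by omega))) := by
  rw [List.mem_iff_getElem]
  constructor
  · rintro ⟨k, hk, hp⟩
    exact ⟨k, by simpa [cyclePairs_length] using hk, by rw [← hp, cyclePairs_getElem]⟩
  · rintro ⟨k, hk, hp⟩
    exact ⟨k, by simpa [cyclePairs_length] using hk, by rw [cyclePairs_getElem, ← hp]⟩

section PairFacts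

variable {vs : List V} (hnd : vs.Nodup) (hn : 3 ≤ vs.length)

include hnd hn

lemma cyclePairs_fst_inj (p q : V × V) (hp : p ∈ cyclePairs vs) (hq : q ∈ cyclePairs vs)
    (h : p.1 = q.1) : p = q := by
  obtain ⟨k, hk, rfl⟩ := mem_cyclePairs.1 hp
  obtain ⟨m, hm, rfl⟩ := mem_cyclePairs.1 hq
  simp only at h
  rw [hnd.getElem_inj_iff] at h
  subst h; rfl

lemma cyclePairs_noswap (p : V × V) (hp : p ∈ cyclePairs vs) : p.swap ∉ cyclePairs vs := by
  intro hq
  obtain ⟨k, hk, hkp⟩ := mem_cyclePairs.1 hp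
  obtain ⟨m, hm, hmp⟩ := mem_cyclePairs.1 hq
  rw [hkp] at hmp
  have h1 : vs[(k + 1) % vs.length]'(Nat.mod_lt _ (by omega)) = vs[m] :=
    congrArg Prod.fst hmp
  have h2 : vs[k] = vs[(m + 1) % vs.length]'(Nat.mod_lt _ (by omega)) :=
    congrArg Prod.snd hmp
  rw [hnd.getElem_inj_iff] at h1 h2
  rw [succ_mod hk] at h1
  rw [succ_mod hm] at h2
  split at h1 <;> split at h2 <;> omega

end PairFacts

/-- Every cycle of the underlying undirected graph has even degree at every vertex. -/
lemma deg2_ucycle {A C : Finset (V × V)} (hA : ∀ a ∈ A, (a.2, a.1) ∉ A)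
    (hC : IsUCycle A C) (v : V) : deg2 C v = 0 := by
  classical
  obtain ⟨vs, hnd, hn, hPA, rfl⟩ := hC
  set P : Finset (V × V) := (cyclePairs vs).toFinset with hPdef
  set g : V × V → ZMod 2 :=
    fun a => (if a.1 = v then 1 else 0) + (if a.2 = v then 1 else 0) with hg
  have hswap : ∀ p ∈ P, p.swap ∉ P := by
    intro p hp hq
    exact cyclePairs_noswap hnd hn p (List.mem_toFinset.1 hp) (List.mem_toFinset.1 hq)
  -- the sum over the cycle equals the sum over the finset of cyclic pairs
  have hsum : deg2 (A.filter fun a => a ∈ cyclePairs vs ∨ a.swap ∈ cyclePairs vs) v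
      = ∑ p ∈ P, g p := by
    rw [deg2]
    apply Finset.sum_nbij' (fun a => if a ∈ P then a else a.swap)
      (fun p => if p ∈ A then p else p.swap)
    · intro a ha
      rw [Finset.mem_filter] at ha
      rcases ha.2 with h | h
      · simp [List.mem_toFinset.2 h, hPdef]
      · by_cases h' : a ∈ P
        · simpa [h']
        · rw [if_neg h']
          exact List.mem_toFinset.2 h
    · intro p hp
      have hp' : p ∈ cyclePairs vs := List.mem_toFinset.1 hp
      rcases hPA p hp' with h | h
      · rw [if_pos h]
        exact Finset.mem_filter.2 ⟨h, Or.inl hp'⟩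
      · by_cases h' : p ∈ A
        · rw [if_pos h']
          exact Finset.mem_filter.2 ⟨h', Or.inl hp'⟩
        · rw [if_neg h']
          exact Finset.mem_filter.2 ⟨h, Or.inr (by simpa using hp')⟩
    · intro a ha
      have haA : a ∈ A := (Finset.mem_filter.1 ha).1
      by_cases h' : a ∈ P
      · simp [h', haA]
      · have hsw : a.swap ∉ A := by
          have := hA a haA
          simpa [Prod.swap] using this
        simp [h', hsw]
    · intro p hp
      by_cases h' : p ∈ A
      · simp [h', hp]
      · have hps : p.swap ∉ P := hswap p hp
        simp [h', hps]
    · intro a ha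
      by_cases h' : a ∈ P
      · rw [if_pos h', hg]
      · rw [if_neg h', hg]
        simp only [Prod.fst_swap, Prod.snd_swap]
        exact add_comm _ _
  rw [hsum]
  have hsplit : ∑ p ∈ P, g p =
      (∑ p ∈ P, (if p.1 = v then (1 : ZMod 2) else 0))
        + ∑ p ∈ P, (if p.2 = v then (1 : ZMod 2) else 0) := by
    rw [hg, Finset.sum_add_distrib]
  have himgfst : P.image Prod.fst = vs.toFinset := by
    ext x
    simp only [Finset.mem_image, List.mem_toFinset, hPdef]
    constructor
    · rintro ⟨p, hp, rfl⟩
      have := List.mem_map_of_mem (f := Prod.fst) hp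
      rwa [cyclePairs, List.map_fst_zip (by simp)] at this
    · intro hx
      have hx' : x ∈ (cyclePairs vs).map Prod.fst := by
        rw [cyclePairs, List.map_fst_zip (by simp)]; exact hx
      obtain ⟨p, hp, rfl⟩ := List.mem_map.1 hx'
      exact ⟨p, hp, rfl⟩
  have himgsnd : P.image Prod.snd = vs.toFinset := by
    ext x
    simp only [Finset.mem_image, List.mem_toFinset, hPdef]
    constructor
    · rintro ⟨p, hp, rfl⟩
      have := List.mem_map_of_mem (f := Prod.snd) hp
      rw [cyclePairs, List.map_snd_zip (by simp)] at this
      exact (List.rotate_perm vs 1).mem_iff.1 this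
    · intro hx
      have hx0 : x ∈ vs.rotate 1 := (List.rotate_perm vs 1).mem_iff.2 hx
      have hx' : x ∈ (cyclePairs vs).map Prod.snd := by
        rw [cyclePairs, List.map_snd_zip (by simp)]; exact hx0
      obtain ⟨p, hp, rfl⟩ := List.mem_map.1 hx'
      exact ⟨p, hp, rfl⟩
  have hfst : ∑ p ∈ P, (if p.1 = v then (1 : ZMod 2) else 0)
      = if v ∈ vs.toFinset then 1 else 0 := by
    have h1 : ∑ x ∈ P.image Prod.fst, (if x = v then (1 : ZMod 2) else 0)
        = ∑ p ∈ P, (if p.1 = v then (1 : ZMod 2) else 0) :=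
      Finset.sum_image (fun p hp q hq h =>
        cyclePairs_fst_inj hnd hn p q (List.mem_toFinset.1 hp) (List.mem_toFinset.1 hq) h)
    rw [← h1, himgfst, Finset.sum_ite_eq']
  have hsnd : ∑ p ∈ P, (if p.2 = v then (1 : ZMod 2) else 0)
      = if v ∈ vs.toFinset then 1 else 0 := by
    have hinj : ∀ p ∈ P, ∀ q ∈ P, p.2 = q.2 → p = q := by
      intro p hp q hq h
      obtain ⟨k, hk, rfl⟩ := mem_cyclePairs.1 (List.mem_toFinset.1 hp)
      obtain ⟨m, hm, rfl⟩ := mem_cyclePairs.1 (List.mem_toFinset.1 hq)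
      simp only at h
      rw [hnd.getElem_inj_iff] at h
      have hkm : k = m := by
        rw [succ_mod hk, succ_mod hm] at h
        split at h <;> split at h <;> omega
      subst hkm; rfl
    have h1 : ∑ x ∈ P.image Prod.snd, (if x = v then (1 : ZMod 2) else 0)
        = ∑ p ∈ P, (if p.2 = v then (1 : ZMod 2) else 0) :=
      Finset.sum_image hinj
    rw [← h1, himgsnd, Finset.sum_ite_eq']
  rw [hsplit, hfst, hsnd, zmod2_add_self]

end CycSpaceAux

/-! ### Auxiliary machinery: connectivity counting -/

namespace CycSpaceAux

/-- The undirected adjacency relation of an arc set. -/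
def relE (E : Finset (V × V)) : V → V → Prop := fun x y => (x, y) ∈ E ∨ (y, x) ∈ E

lemma relE_symm (E : Finset (V × V)) : Symmetric (relE E) := fun _ _ h => h.symm

/-- Connectivity via `E` as a setoid. -/
def connSetoid (E : Finset (V × V)) : Setoid V :=
  ⟨Relation.ReflTransGen (relE E),
    ⟨fun _ => Relation.ReflTransGen.refl,
     fun h => (@Relation.ReflTransGen.stdSymm _ (relE _) ⟨fun _ _ hh => relE_symm _ hh⟩).symm _ _ h,
     fun h h' => Relation.ReflTransGen.trans h h'⟩⟩

lemma relE_mono {e : V × V} {s : Finset (V × V)} {x y : V} (h : relE s x y) :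
    relE (insert e s) x y :=
  h.imp (Finset.mem_insert_of_mem) (Finset.mem_insert_of_mem)

lemma reach_insert_cases {e : V × V} {s : Finset (V × V)} {x y : V}
    (h : Relation.ReflTransGen (relE (insert e s)) x y) :
    Relation.ReflTransGen (relE s) x y ∨
    (Relation.ReflTransGen (relE s) x e.1 ∧ Relation.ReflTransGen (relE s) e.2 y) ∨
    (Relation.ReflTransGen (relE s) x e.2 ∧ Relation.ReflTransGen (relE s) e.1 y) := by
  induction h with
  | refl => exact Or.inl .refl
  | @tail b c hxb hbc ih =>
    have step : relE s b c ∨ (b = e.1 ∧ c = e.2) ∨ (b = e.2 ∧ c = e.1) := by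
      rcases hbc with h' | h'
      · rcases Finset.mem_insert.1 h' with h' | h'
        · have := Prod.ext_iff.1 h'
          exact Or.inr (Or.inl ⟨this.1, this.2⟩)
        · exact Or.inl (Or.inl h')
      · rcases Finset.mem_insert.1 h' with h' | h'
        · have := Prod.ext_iff.1 h'
          exact Or.inr (Or.inr ⟨this.2, this.1⟩)
        · exact Or.inl (Or.inr h')
    rcases step with hstep | ⟨hb, hc⟩ | ⟨hb, hc⟩
    · rcases ih with ih | ⟨ih1, ih2⟩ | ⟨ih1, ih2⟩
      · exact Or.inl (ih.tail hstep)
      · exact Or.inr (Or.inl ⟨ih1, ih2.tail hstep⟩)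
      · exact Or.inr (Or.inr ⟨ih1, ih2.tail hstep⟩)
    · subst hb; subst hc
      rcases ih with ih | ⟨ih1, _⟩ | ⟨ih1, _⟩
      · exact Or.inr (Or.inl ⟨ih, .refl⟩)
      · exact Or.inr (Or.inl ⟨ih1, .refl⟩)
      · exact Or.inl ih1
    · subst hb; subst hc
      rcases ih with ih | ⟨ih1, _⟩ | ⟨ih1, _⟩
      · exact Or.inr (Or.inr ⟨ih, .refl⟩)
      · exact Or.inl ih1
      · exact Or.inr (Or.inr ⟨ih1, .refl⟩)

lemma classes_le_insert (e : V × V) (s : Finset (V × V)) :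
    Fintype.card (Quotient (connSetoid s)) ≤
      Fintype.card (Quotient (connSetoid (insert e s))) + 1 := by
  classical
  set lift : Quotient (connSetoid s) → Quotient (connSetoid (insert e s)) :=
    Quotient.map' id (fun x y h => Relation.ReflTransGen.mono (r := relE s) (p := relE (insert e s)) (fun u w => relE_mono) x y h)
    with hlift
  set c1 : Quotient (connSetoid s) := Quotient.mk (connSetoid s) e.1 with hc1
  have hinj : Function.Injective (fun q : Quotient (connSetoid s) =>
      if q = c1 then (none : Option (Quotient (connSetoid (insert e s))))
      else some (lift q)) := by
    intro q1 q2 h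
    by_cases h1 : q1 = c1 <;> by_cases h2 : q2 = c1
    · rw [h1, h2]
    · simp [h1, h2] at h
    · simp [h1, h2] at h
    · simp only [h1, h2, if_neg, ite_false, Option.some.injEq] at h
      obtain ⟨x, rfl⟩ := Quotient.exists_rep q1
      obtain ⟨y, rfl⟩ := Quotient.exists_rep q2
      have hxy : Relation.ReflTransGen (relE (insert e s)) x y := by
        have := h
        rw [hlift] at this
        change (Quotient.mk _ x : Quotient (connSetoid (insert e s))) = Quotient.mk _ y at this
        exact Quotient.exact this
      rcases reach_insert_cases hxy with hcase | ⟨hcase1, _⟩ | ⟨_, hcase2⟩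
      · exact Quotient.sound hcase
      · exact absurd (Quotient.sound hcase1) h1
      · exact absurd (Quotient.sound
          ((@Relation.ReflTransGen.stdSymm _ (relE _) ⟨fun _ _ hh => relE_symm _ hh⟩).symm _ _ hcase2)) h2
  have hle := Fintype.card_le_of_injective _ hinj
  rwa [Fintype.card_option] at hle

/-- A graph with `|E|` edges has at least `|V| - |E|` connected components. -/
lemma card_le_card_add_classes (E : Finset (V × V)) :
    Fintype.card V ≤ E.card + Fintype.card (Quotient (connSetoid E)) := by
  classical
  induction E using Finset.induction_on with
  | empty =>
    have hinj : Function.Injective (Quotient.mk (connSetoid (∅ : Finset (V × V)))) := by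
      intro x y h
      have h' : Relation.ReflTransGen (relE (∅ : Finset (V × V))) x y := Quotient.exact h
      exact ((Relation.reflTransGen_iff_eq (fun b hb => by simp [relE] at hb)).1 h').symm
    simpa using Fintype.card_le_of_injective _ hinj
  | @insert e s he ih =>
    have h1 := classes_le_insert e s
    rw [Finset.card_insert_of_notMem he]
    omega

/-- Removing an edge from a spanning tree disconnects its endpoints. -/
lemma not_reach_erase {A T : Finset (V × V)} (hT : IsSpanningTree A T) {e : V × V}
    (he : e ∈ T) : ¬ Relation.ReflTransGen (relE (T.erase e)) e.1 e.2 := by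
  intro h
  have hall : ∀ u v : V, Relation.ReflTransGen (relE (T.erase e)) u v := by
    intro u v
    have huv := hT.2.1 u v
    induction huv with
    | refl => exact .refl
    | @tail b c hub hbc ih =>
      apply ih.trans
      rcases hbc with hbc | hbc
      · by_cases hbe : (b, c) = e
        · have hb : b = e.1 := (Prod.ext_iff.1 hbe).1
          have hc : c = e.2 := (Prod.ext_iff.1 hbe).2
          rw [hb, hc]; exact h
        · exact Relation.ReflTransGen.single (Or.inl (Finset.mem_erase.2 ⟨hbe, hbc⟩))
      · by_cases hbe : (c, b) = e
        · have hc : c = e.1 := (Prod.ext_iff.1 hbe).1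
          have hb : b = e.2 := (Prod.ext_iff.1 hbe).2
          rw [hb, hc]
          exact (@Relation.ReflTransGen.stdSymm _ (relE _) ⟨fun _ _ hh => relE_symm _ hh⟩).symm _ _ h
        · exact Relation.ReflTransGen.single (Or.inr (Finset.mem_erase.2 ⟨hbe, hbc⟩))
  have hone : Fintype.card (Quotient (connSetoid (T.erase e))) ≤ 1 :=
    Fintype.card_le_one_iff.2 (fun q1 q2 => by
      obtain ⟨x, rfl⟩ := Quotient.exists_rep q1
      obtain ⟨y, rfl⟩ := Quotient.exists_rep q2
      exact Quotient.sound (hall x y))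
  have hcount := card_le_card_add_classes (V := V) (T.erase e)
  have hcard : (T.erase e).card = T.card - 1 := Finset.card_erase_of_mem he
  have hpos : 0 < T.card := Finset.card_pos.2 ⟨e, he⟩
  have hTcard := hT.2.2
  omega

/-- A subset of a spanning tree in which every vertex has even degree is empty. -/
lemma eq_empty_of_even_subset_tree {A T S : Finset (V × V)} (hT : IsSpanningTree A T)
    (hS : S ⊆ T) (hdeg : ∀ v, deg2 S v = 0) : S = ∅ := by
  classical
  by_contra hne
  obtain ⟨e, he⟩ := Finset.nonempty_of_ne_empty hne
  have heT : e ∈ T := hS he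
  set U : Finset V :=
    Finset.univ.filter (fun v => Relation.ReflTransGen (relE (T.erase e)) e.1 v) with hU
  have he1 : e.1 ∈ U := Finset.mem_filter.2 ⟨Finset.mem_univ _, .refl⟩
  have he2 : e.2 ∉ U := fun h => not_reach_erase hT heT (Finset.mem_filter.1 h).2
  have hcross : ∀ a ∈ S, a ≠ e → (a.1 ∈ U ↔ a.2 ∈ U) := by
    intro a haS hane
    have haT : a ∈ T.erase e := Finset.mem_erase.2 ⟨hane, hS haS⟩
    have hstep : Relation.ReflTransGen (relE (T.erase e)) a.1 a.2 :=
      Relation.ReflTransGen.single (Or.inl haT)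
    constructor
    · intro h
      exact Finset.mem_filter.2 ⟨Finset.mem_univ _,
        ((Finset.mem_filter.1 h).2).trans hstep⟩
    · intro h
      exact Finset.mem_filter.2 ⟨Finset.mem_univ _,
        ((Finset.mem_filter.1 h).2).trans ((@Relation.ReflTransGen.stdSymm _ (relE _) ⟨fun _ _ hh => relE_symm _ hh⟩).symm _ _ hstep)⟩
  have hzero : ∑ v ∈ U, deg2 S v = 0 := Finset.sum_eq_zero (fun v _ => hdeg v)
  have hswap : ∑ v ∈ U, deg2 S v
      = ∑ a ∈ S, ((if a.1 ∈ U then (1 : ZMod 2) else 0) + (if a.2 ∈ U then 1 else 0)) := by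
    unfold deg2
    rw [Finset.sum_comm]
    refine Finset.sum_congr rfl (fun a _ => ?_)
    rw [Finset.sum_add_distrib, Finset.sum_ite_eq U a.1 (fun _ => (1 : ZMod 2)),
      Finset.sum_ite_eq U a.2 (fun _ => (1 : ZMod 2))]
  have hone : ∑ a ∈ S, ((if a.1 ∈ U then (1 : ZMod 2) else 0) + (if a.2 ∈ U then 1 else 0))
      = 1 := by
    rw [Finset.sum_eq_single e]
    · rw [if_pos he1, if_neg he2, add_zero]
    · intro a haS hane
      by_cases h1 : a.1 ∈ U
      · have h2 : a.2 ∈ U := (hcross a haS hane).1 h1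
        rw [if_pos h1, if_pos h2]; decide
      · have h2 : a.2 ∉ U := fun hh => h1 ((hcross a haS hane).2 hh)
        rw [if_neg h1, if_neg h2, add_zero]
    · intro h; exact absurd he h
  have : (1 : ZMod 2) = 0 := by rw [← hone, ← hswap]; exact hzero
  exact one_ne_zero this

/-! ### Fold lemmas -/

lemma mem_foldSymmDiff {A T CD : Finset (V × V)} {Ca : V × V → Finset (V × V)}
    (hCa : ∀ a ∈ CD \ T, IsFundCycle A T a (Ca a)) :
    ∀ s : Finset (V × V), s ⊆ CD \ T → ∀ b, b ∉ T → (b ∈ foldSymmDiff s Ca ↔ b ∈ s) := by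
  intro s
  induction s using Finset.induction_on with
  | empty => intro _ b _; simp [foldSymmDiff]
  | @insert x s hx ih =>
    intro hsub b hb
    have hxT : x ∈ CD \ T := hsub (Finset.mem_insert_self x s)
    have hsub' : s ⊆ CD \ T := fun y hy => hsub (Finset.mem_insert_of_mem hy)
    have hrec : b ∈ foldSymmDiff s Ca ↔ b ∈ s := ih hsub' b hb
    have hbx : b ∈ Ca x ↔ b = x := by
      constructor
      · intro hbca
        by_contra hne
        exact hb ((hCa x hxT).2.2 (Finset.mem_sdiff.2 ⟨hbca, by simp [hne]⟩))
      · rintro rfl; exact (hCa _ hxT).2.1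
    simp only [foldSymmDiff, Finset.fold_insert hx, Finset.mem_symmDiff, Finset.mem_insert]
    constructor
    · rintro (⟨h1, _⟩ | ⟨h1, _⟩)
      · exact Or.inl (hbx.1 h1)
      · exact Or.inr (hrec.1 h1)
    · rintro (rfl | hbs)
      · exact Or.inl ⟨hbx.2 rfl, fun hbf => hx (hrec.1 hbf)⟩
      · refine Or.inr ⟨hrec.2 hbs, fun hbca => ?_⟩
        exact hx (by rwa [hbx.1 hbca] at hbs)

lemma deg2_foldSymmDiff {A T CD : Finset (V × V)} (hA : ∀ a ∈ A, (a.2, a.1) ∉ A)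
    {Ca : V × V → Finset (V × V)}
    (hCa : ∀ a ∈ CD \ T, IsFundCycle A T a (Ca a)) :
    ∀ s : Finset (V × V), s ⊆ CD \ T → ∀ v, deg2 (foldSymmDiff s Ca) v = 0 := by
  intro s
  induction s using Finset.induction_on with
  | empty => intro _ v; simp [foldSymmDiff, deg2]
  | @insert x s hx ih =>
    intro hsub v
    have hxT : x ∈ CD \ T := hsub (Finset.mem_insert_self x s)
    have hsub' : s ⊆ CD \ T := fun y hy => hsub (Finset.mem_insert_of_mem hy)
    have hfold : foldSymmDiff (insert x s) Ca = symmDiff (Ca x) (foldSymmDiff s Ca) :=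
      Finset.fold_insert hx
    rw [hfold, deg2_symmDiff, ih hsub' v, deg2_ucycle hA (hCa x hxT).1 v, add_zero]

end CycSpaceAux
/-- Every cycle `C_D` of the underlying undirected graph of `D` equals the iterated
symmetric difference of the fundamental cycles `C_a` over the non-tree arcs
`a ∈ C_D ∖ T`. -/
theorem cycle_eq_symmDiff_of_fundamental_cycles (A T : Finset (V × V))
    (hA : ∀ a ∈ A, (a.2, a.1) ∉ A) (hT : IsSpanningTree A T)
    (CD : Finset (V × V)) (hCD : IsUCycle A CD)
    (Ca : V × V → Finset (V × V))
    (hCa : ∀ a ∈ CD \ T, IsFundCycle A T a (Ca a)) :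
    CD = foldSymmDiff (CD \ T) Ca := by
  classical
  set F := foldSymmDiff (CD \ T) Ca with hF
  have hmemF : ∀ b, b ∉ T → (b ∈ F ↔ b ∈ CD \ T) := fun b hb =>
    CycSpaceAux.mem_foldSymmDiff hCa (CD \ T) (Finset.Subset.refl _) b hb
  have hSsubT : symmDiff CD F ⊆ T := by
    intro b hb
    by_contra hbT
    rw [Finset.mem_symmDiff] at hb
    rcases hb with ⟨h1, h2⟩ | ⟨h1, h2⟩
    · exact h2 ((hmemF b hbT).2 (Finset.mem_sdiff.2 ⟨h1, hbT⟩))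
    · exact h2 (Finset.mem_sdiff.1 ((hmemF b hbT).1 h1)).1
  have hdeg : ∀ v, CycSpaceAux.deg2 (symmDiff CD F) v = 0 := by
    intro v
    rw [CycSpaceAux.deg2_symmDiff, CycSpaceAux.deg2_ucycle hA hCD v, hF,
      CycSpaceAux.deg2_foldSymmDiff hA hCa (CD \ T) (Finset.Subset.refl _) v, add_zero]
  have hSempty : symmDiff CD F = ∅ :=
    CycSpaceAux.eq_empty_of_even_subset_tree hT hSsubT hdeg
  have h0 : symmDiff CD F = ⊥ := by rw [Finset.bot_eq_empty]; exact hSempty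
  exact symmDiff_eq_bot.1 h0
end
end

section
/- Let f be an optimal tree solution with tree structure (T,L,U), y the associated tree potential, and S = {a ∉ T : c̄_a = 0}. Then the flows f + λ χ(C_a), for a ∈ S and integers 1 ≤ λ ≤ u(C_a), are pairwise distinct optimal integer flows, each different from f; consequently the number F of optimal integer flows satisfies F ≥ Σ_{a∈S} u(C_a). -/
open scoped Classical
noncomputable section

variable {V : Type} [Fintype V] [DecidableEq V]

namespace Network

/-- A tree solution: a feasible flow together with a spanning tree `T` and a partition
`A ∖ T = L ∪ U` such that `f = l` on `L` and `f = u` on `U`. -/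
def IsTreeSolution (N : Network V) (f : V × V → ℤ) (T L U : Finset (V × V)) : Prop :=
  N.Feasible f ∧ IsSpanningTree N.A T ∧ L ∪ U = N.A \ T ∧ Disjoint L U ∧
    (∀ a ∈ L, f a = N.l a) ∧ ∀ a ∈ U, f a = N.u a

end Network

/-- `vs` is a traversal (in the direction of `a`, starting with `a`) of the unique cycle
induced by the non-tree arc `a`: `a` together with the tree path from `a.2` to `a.1`. -/
def IsInducedCycleList (A T : Finset (V × V)) (a : V × V) (vs : List V) : Prop :=
  vs.Nodup ∧ (∃ rest, vs = a.1 :: a.2 :: rest) ∧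
    ∀ p ∈ cyclePairs vs, p = a ∨ p ∈ T ∨ p.swap ∈ T

/-- The incidence vector of the cycle traversal `vs` (in traversal direction). -/
def chiList (vs : List V) : V × V → ℤ := fun e =>
  if e ∈ cyclePairs vs then 1 else if e.swap ∈ cyclePairs vs then -1 else 0

/-- The incidence vector `χ(C_a)` of the induced cycle `C_a` (given by the traversal list
`vs` in the direction of `a`), oriented in the direction of `a` if `a ∈ L` and opposite to
`a` otherwise, and supported on the arc set `A` of the network. -/
def chiInd (N : Network V) (L : Finset (V × V)) (a : V × V) (vs : List V) : V × V → ℤ :=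
  fun e => if e ∈ N.A then (if a ∈ L then chiList vs e else -chiList vs e) else 0

/-- The cost `c(C_a) = ∑_{e ∈ A} χ_e(C_a) c_e` of an induced cycle. -/
def indCycleCost (N : Network V) (L : Finset (V × V)) (a : V × V) (vs : List V) : ℝ :=
  ∑ e ∈ N.A, (chiInd N L a vs e : ℝ) * N.c e

/-- The equivalent undirected cycle `C_D ⊆ A` of a directed cycle `C` of the residual
graph: the arcs of `A` traversed by `C` in either direction. -/
def Network.equivCycle (N : Network V) (C : Cyc V) : Finset (V × V) :=
  N.A.filter fun a => a ∈ C.arcs ∨ (a.2, a.1) ∈ C.arcs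

/-- The set `S` of non-tree arcs with zero reduced cost. -/
def zeroRedNonTree (N : Network V) (T : Finset (V × V)) (y : V → ℝ) : Finset (V × V) :=
  (N.A \ T).filter fun a => N.redCost y a = 0

/-- The free capacity `u(C_a)` of an induced cycle with incidence vector `χ`:
the minimum over the arcs `e` of the cycle of `u_e − f_e` if `χ_e = 1` and of `f_e`
if `χ_e = −1`. -/
def freeCap (N : Network V) (f : V × V → ℤ) (χ : V × V → ℤ) : ℤ :=
  sInf {x : ℤ | ∃ e ∈ N.A, χ e ≠ 0 ∧ x = if χ e = 1 then N.u e - f e else f e}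


section Helpers
set_option linter.unusedSectionVars false

lemma sum_map_sub' {α M : Type*} [AddCommGroup M] (l : List α) (g h : α → M) :
    (l.map (fun x => g x - h x)).sum = (l.map g).sum - (l.map h).sum := by
  induction l with
  | nil => simp
  | cons x xs ih => simp [ih]; abel

lemma map_fst_cyclePairs (vs : List V) : (cyclePairs vs).map Prod.fst = vs := by
  simp [cyclePairs, List.map_fst_zip, List.length_rotate]

lemma map_snd_cyclePairs (vs : List V) : (cyclePairs vs).map Prod.snd = vs.rotate 1 := by
  simp [cyclePairs, List.map_snd_zip, List.length_rotate]

lemma cyclePairs_telescope {M : Type*} [AddCommGroup M] (vs : List V) (g : V → M) :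
    ((cyclePairs vs).map (fun p => g p.1 - g p.2)).sum = 0 := by
  have h1 : ((cyclePairs vs).map (fun p => g p.1 - g p.2)).sum
      = ((cyclePairs vs).map (fun p => g p.1)).sum - ((cyclePairs vs).map (fun p => g p.2)).sum :=
    sum_map_sub' _ _ _
  have h2 : ((cyclePairs vs).map (fun p => g p.1)).sum = (vs.map g).sum := by
    rw [show (fun p : V × V => g p.1) = g ∘ Prod.fst from rfl, ← List.map_map, map_fst_cyclePairs]
  have h3 : ((cyclePairs vs).map (fun p => g p.2)).sum = ((vs.rotate 1).map g).sum := by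
    rw [show (fun p : V × V => g p.2) = g ∘ Prod.snd from rfl, ← List.map_map, map_snd_cyclePairs]
  have h4 : ((vs.rotate 1).map g).sum = (vs.map g).sum :=
    ((vs.rotate_perm 1).map g).sum_eq
  rw [h1, h2, h3, h4, sub_self]

lemma cyclePairs_nodup {vs : List V} (h : vs.Nodup) : (cyclePairs vs).Nodup :=
  List.Nodup.of_map Prod.fst ((map_fst_cyclePairs vs).symm ▸ h)

lemma mem_cyclePairs_iff {vs : List V} {p : V × V} :
    p ∈ cyclePairs vs ↔ ∃ i : ℕ, ∃ h : i < vs.length,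
      vs[i] = p.1 ∧ vs[(i+1) % vs.length]'(Nat.mod_lt _ (Nat.zero_lt_of_lt h)) = p.2 := by
  constructor
  · intro hp
    rw [cyclePairs, List.mem_iff_getElem] at hp
    obtain ⟨i, hi, hg⟩ := hp
    rw [List.length_zip, List.length_rotate, min_self] at hi
    refine ⟨i, hi, ?_, ?_⟩
    · have := List.getElem_zip (l := vs) (l' := vs.rotate 1) (i := i)
        (h := by rw [List.length_zip, List.length_rotate, min_self]; exact hi)
      rw [hg] at this; exact congrArg Prod.fst this.symm
    · have h2 := List.getElem_zip (l := vs) (l' := vs.rotate 1) (i := i)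
        (h := by rw [List.length_zip, List.length_rotate, min_self]; exact hi)
      rw [hg] at h2
      have h3 : (vs.rotate 1)[i]'(by rw [List.length_rotate]; exact hi)
          = vs[(i+1) % vs.length]'(Nat.mod_lt _ (Nat.zero_lt_of_lt hi)) := by
        rw [List.getElem_rotate]
      rw [← h3]; exact congrArg Prod.snd h2.symm
  · rintro ⟨i, hi, h1, h2⟩
    rw [cyclePairs, List.mem_iff_getElem]
    refine ⟨i, by rw [List.length_zip, List.length_rotate, min_self]; exact hi, ?_⟩
    rw [List.getElem_zip, h1]
    have h3 : (vs.rotate 1)[i]'(by rw [List.length_rotate]; exact hi)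
        = vs[(i+1) % vs.length]'(Nat.mod_lt _ (Nat.zero_lt_of_lt hi)) := by
      rw [List.getElem_rotate]
    rw [h3, h2]

lemma cyclePairs_no_swap {vs : List V} (h : vs.Nodup) (h3 : 3 ≤ vs.length)
    {p : V × V} (hp : p ∈ cyclePairs vs) : p.swap ∉ cyclePairs vs := by
  intro hq
  rw [mem_cyclePairs_iff] at hp hq
  obtain ⟨i, hi, hi1, hi2⟩ := hp
  obtain ⟨j, hj, hj1, hj2⟩ := hq
  simp only [Prod.fst_swap, Prod.snd_swap] at hj1 hj2
  set n := vs.length with hn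
  have e1 : (i+1) % n = j := (List.Nodup.getElem_inj_iff h).mp (by rw [hi2, hj1])
  have e2 : (j+1) % n = i := (List.Nodup.getElem_inj_iff h).mp (by rw [hj2, hi1])
  rcases Nat.lt_or_ge (i+1) n with hc | hc
  · rw [Nat.mod_eq_of_lt hc] at e1
    subst e1
    rcases Nat.lt_or_ge (i+1+1) n with hd | hd
    · rw [Nat.mod_eq_of_lt hd] at e2; omega
    · rw [show i+1+1 = n by omega, Nat.mod_self] at e2; omega
  · rw [show i+1 = n by omega, Nat.mod_self] at e1
    subst e1
    rw [Nat.mod_eq_of_lt (by omega)] at e2; omega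

lemma chiList_eq_zero {vs : List V} {e : V × V} (h1 : e ∉ cyclePairs vs)
    (h2 : e.swap ∉ cyclePairs vs) : chiList vs e = 0 := by
  simp [chiList, h1, h2]

lemma sum_chiList_smul {M : Type*} [AddCommGroup M] (A : Finset (V × V)) (vs : List V)
    (hnd : (cyclePairs vs).Nodup)
    (hswap : ∀ p ∈ cyclePairs vs, p.swap ∉ cyclePairs vs)
    (hA : ∀ p ∈ cyclePairs vs, p ∈ A ∨ p.swap ∈ A)
    (hAnti : ∀ e ∈ A, e.swap ∉ A)
    (w : V × V → M) (hw : ∀ e, w e.swap = - w e) :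
    ∑ e ∈ A, chiList vs e • w e = ((cyclePairs vs).map w).sum := by
  classical
  set P := (cyclePairs vs).toFinset with hP
  have hmemP : ∀ p, p ∈ P ↔ p ∈ cyclePairs vs := by
    intro p; simp [hP, List.mem_toFinset]
  set ψ : V × V → V × V := fun p => if p ∈ A then p else p.swap with hψ
  have hrhs : ((cyclePairs vs).map w).sum = ∑ p ∈ P, w p := by
    rw [hP, List.sum_toFinset _ hnd]
  have stepA : ∀ p ∈ P, w p = chiList vs (ψ p) • w (ψ p) := by
    intro p hp
    rw [hmemP] at hp
    by_cases hpA : p ∈ A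
    · have : ψ p = p := by simp [hψ, hpA]
      rw [this]
      have : chiList vs p = 1 := by simp [chiList, hp]
      rw [this, one_smul]
    · have h1 : ψ p = p.swap := by simp [hψ, hpA]
      have h2 : p.swap ∉ cyclePairs vs := hswap p hp
      have h3 : chiList vs p.swap = -1 := by
        simp [chiList, h2, Prod.swap_swap, hp]
      rw [h1, h3, neg_smul, one_smul, hw, neg_neg]
  have hinj : Set.InjOn ψ P := by
    intro p hp q hq hpq
    rw [Finset.mem_coe, hmemP] at hp hq
    simp only [hψ] at hpq
    by_cases hpA : p ∈ A <;> by_cases hqA : q ∈ A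
    · rwa [if_pos hpA, if_pos hqA] at hpq
    · rw [if_pos hpA, if_neg hqA] at hpq
      exact absurd (hpq ▸ hp) (hswap q hq)
    · rw [if_neg hpA, if_pos hqA] at hpq
      exact absurd (hpq ▸ hq) (hswap p hp)
    · rw [if_neg hpA, if_neg hqA] at hpq
      exact Prod.swap_injective hpq
  have stepB : ∑ e ∈ P.image ψ, chiList vs e • w e = ∑ p ∈ P, chiList vs (ψ p) • w (ψ p) :=
    Finset.sum_image (fun p hp q hq h => hinj hp hq h)
  have hsub : P.image ψ ⊆ A := by
    intro e he
    rw [Finset.mem_image] at he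
    obtain ⟨p, hp, rfl⟩ := he
    rw [hmemP] at hp
    by_cases hpA : p ∈ A
    · simpa [hψ, hpA] using hpA
    · have := (hA p hp).resolve_left hpA
      simpa [hψ, hpA] using this
  have stepC : ∑ e ∈ P.image ψ, chiList vs e • w e = ∑ e ∈ A, chiList vs e • w e := by
    apply Finset.sum_subset hsub
    intro e heA henotim
    have h1 : e ∉ cyclePairs vs := by
      intro hmem
      apply henotim
      rw [Finset.mem_image]
      exact ⟨e, (hmemP e).mpr hmem, by simp [hψ, heA]⟩
    have h2 : e.swap ∉ cyclePairs vs := by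
      intro hmem
      apply henotim
      rw [Finset.mem_image]
      refine ⟨e.swap, (hmemP _).mpr hmem, ?_⟩
      have : e.swap ∉ A := hAnti e heA
      simp [hψ, this]
    rw [chiList_eq_zero h1 h2, zero_smul]
  rw [hrhs, Finset.sum_congr rfl stepA, ← stepB, stepC]

section CycleFacts

variable {A T : Finset (V × V)} {a : V × V} {vs : List V}
variable (hAnti : ∀ e ∈ A, e.swap ∉ A) (hTA : T ⊆ A)
variable (haA : a ∈ A) (haT : a ∉ T) (hvs : IsInducedCycleList A T a vs)

include hAnti hTA haA haT hvs

lemma cfacts_three_le : 3 ≤ vs.length := by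
  obtain ⟨hnd, ⟨rest, hrest⟩, hpairs⟩ := hvs
  rcases rest with _ | ⟨z, rest'⟩
  · exfalso
    have hne : a.1 ≠ a.2 := by
      rw [hrest] at hnd; simp at hnd; tauto
    have hmem : (a.2, a.1) ∈ cyclePairs vs := by
      rw [hrest]
      simp [cyclePairs, List.rotate]
    rcases hpairs _ hmem with h | h | h
    · exact hne (congrArg Prod.fst h).symm
    · exact hAnti a haA (hTA h)
    · apply haT
      have : (Prod.swap (a.2, a.1)) = a := rfl
      rwa [this] at h
  · rw [hrest]; simp

omit hAnti hTA haA haT hvs in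
lemma cfacts_mem_pairs (hvs : IsInducedCycleList A T a vs) : a ∈ cyclePairs vs := by
  obtain ⟨hnd, ⟨rest, hrest⟩, hpairs⟩ := hvs
  rw [hrest]
  rw [cyclePairs, show (1:ℕ) = 0+1 from rfl, List.rotate_cons_succ, List.rotate_zero,
    List.cons_append, List.zip_cons_cons]
  exact List.mem_cons_self

lemma cfacts_support : ∀ e ∈ A, chiList vs e ≠ 0 → e = a ∨ e ∈ T := by
  obtain ⟨hnd, ⟨rest, hrest⟩, hpairs⟩ := hvs
  intro e he hchi
  have hmem : e ∈ cyclePairs vs ∨ e.swap ∈ cyclePairs vs := by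
    by_contra hc
    push_neg at hc
    simp [chiList, hc.1, hc.2] at hchi
  rcases hmem with h | h
  · rcases hpairs e h with h1 | h1 | h1
    · exact Or.inl h1
    · exact Or.inr h1
    · exact absurd (hTA h1) (hAnti e he)
  · rcases hpairs _ h with h1 | h1 | h1
    · exfalso
      have : e = a.swap := by rw [← h1, Prod.swap_swap]
      rw [this] at he
      exact hAnti a haA he
    · exact absurd (hTA h1) (hAnti e he)
    · rw [Prod.swap_swap] at h1; exact Or.inr h1

lemma cfacts_pairs_mem_A : ∀ p ∈ cyclePairs vs, p ∈ A ∨ p.swap ∈ A := by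
  obtain ⟨hnd, ⟨rest, hrest⟩, hpairs⟩ := hvs
  intro p hp
  rcases hpairs p hp with h | h | h
  · exact Or.inl (h ▸ haA)
  · exact Or.inl (hTA h)
  · exact Or.inr (hTA h)

end CycleFacts
end Helpers

/-- The flows `f + λ χ(C_a)` for `a ∈ S` and `1 ≤ λ ≤ u(C_a)` are pairwise distinct
optimal integer flows, each different from `f`; consequently the number `F` of optimal
integer flows satisfies `F ≥ ∑_{a ∈ S} u(C_a)`. -/
theorem card_optimal_ge (N : Network V) (hN : N.Wellformed)
    (hl : ∀ a ∈ N.A, N.l a = 0)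
    (f : V × V → ℤ) (T L U : Finset (V × V)) (hts : N.IsTreeSolution f T L U)
    (hopt : N.Optimal f)
    (r : V) (y : V → ℝ) (hyr : y r = 0) (hyT : ∀ a ∈ T, N.redCost y a = 0)
    (vsf : V × V → List V)
    (hvs : ∀ a ∈ zeroRedNonTree N T y, IsInducedCycleList N.A T a (vsf a)) :
    (∀ a ∈ zeroRedNonTree N T y, ∀ lam : ℤ,
        1 ≤ lam → lam ≤ freeCap N f (chiInd N L a (vsf a)) →
        N.Optimal (fun e => f e + lam * chiInd N L a (vsf a) e) ∧
          (fun e => f e + lam * chiInd N L a (vsf a) e) ≠ f) ∧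
    (∀ a ∈ zeroRedNonTree N T y, ∀ a' ∈ zeroRedNonTree N T y, ∀ lam lam' : ℤ,
        1 ≤ lam → lam ≤ freeCap N f (chiInd N L a (vsf a)) →
        1 ≤ lam' → lam' ≤ freeCap N f (chiInd N L a' (vsf a')) →
        (a, lam) ≠ (a', lam') →
        (fun e => f e + lam * chiInd N L a (vsf a) e) ≠
          fun e => f e + lam' * chiInd N L a' (vsf a') e) ∧
    (∑ a ∈ zeroRedNonTree N T y, freeCap N f (chiInd N L a (vsf a))) ≤
      ({g : V × V → ℤ | N.Optimal g}.ncard : ℤ) := by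
  classical
  obtain ⟨hfeas, hstree, hLU, hdisjLU, hfL, hfU⟩ := hts
  obtain ⟨hTA, hconn, hcardT⟩ := hstree
  have hAnti : ∀ e ∈ N.A, e.swap ∉ N.A := fun e he => hN.1 e he
  have hSmem : ∀ a ∈ zeroRedNonTree N T y, a ∈ N.A ∧ a ∉ T ∧ N.redCost y a = 0 := by
    intro a ha
    rw [zeroRedNonTree, Finset.mem_filter, Finset.mem_sdiff] at ha
    exact ⟨ha.1.1, ha.1.2, ha.2⟩
  have hχval : ∀ (a : V × V) (e : V × V), chiInd N L a (vsf a) e = 0 ∨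
      chiInd N L a (vsf a) e = 1 ∨ chiInd N L a (vsf a) e = -1 := by
    intro a e
    simp only [chiInd, chiList]
    split_ifs <;> simp
  have hχ_notA : ∀ (a : V × V) (e : V × V), e ∉ N.A → chiInd N L a (vsf a) e = 0 := by
    intro a e h; simp [chiInd, h]
  have hχ_on_A : ∀ (a : V × V) (e : V × V), e ∈ N.A →
      chiInd N L a (vsf a) e = (if a ∈ L then 1 else -1) * chiList (vsf a) e := by
    intro a e h
    simp only [chiInd, if_pos h]
    split_ifs <;> ring
  have hχa : ∀ a ∈ zeroRedNonTree N T y,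
      chiInd N L a (vsf a) a = (if a ∈ L then 1 else -1) := by
    intro a ha
    have hm := cfacts_mem_pairs (hvs a ha)
    rw [hχ_on_A a a (hSmem a ha).1]
    simp [chiList, hm]
  have hχa_ne : ∀ a ∈ zeroRedNonTree N T y, chiInd N L a (vsf a) a ≠ 0 := by
    intro a ha; rw [hχa a ha]; split_ifs <;> norm_num
  have hbalχ : ∀ a ∈ zeroRedNonTree N T y, ∀ i : V,
      (∑ e ∈ N.A.filter (fun e => e.1 = i), chiInd N L a (vsf a) e)
      - (∑ e ∈ N.A.filter (fun e => e.2 = i), chiInd N L a (vsf a) e) = 0 := by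
    intro a ha i
    obtain ⟨haA, haT, hared⟩ := hSmem a ha
    have hnd := (hvs a ha).1
    have h3 := cfacts_three_le hAnti hTA haA haT (hvs a ha)
    have hsum := sum_chiList_smul (M := ℤ) N.A (vsf a) (cyclePairs_nodup hnd)
        (fun p hp => cyclePairs_no_swap hnd h3 hp)
        (cfacts_pairs_mem_A hAnti hTA haA haT (hvs a ha)) hAnti
        (fun e => (if e.1 = i then (1:ℤ) else 0) - (if e.2 = i then 1 else 0))
        (by intro e; simp only [Prod.fst_swap, Prod.snd_swap]; ring)
    have htel : ((cyclePairs (vsf a)).map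
        (fun e : V × V => (if e.1 = i then (1:ℤ) else 0) - (if e.2 = i then 1 else 0))).sum = 0 :=
      cyclePairs_telescope (vsf a) (fun v => if v = i then (1:ℤ) else 0)
    rw [htel] at hsum
    have e1 : ∑ e ∈ N.A.filter (fun e => e.1 = i), chiInd N L a (vsf a) e
        = (if a ∈ L then 1 else -1) * ∑ e ∈ N.A, (if e.1 = i then chiList (vsf a) e else 0) := by
      rw [Finset.mul_sum, Finset.sum_filter]
      apply Finset.sum_congr rfl
      intro e he
      by_cases h : e.1 = i
      · rw [if_pos h, if_pos h, hχ_on_A a e he]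
      · rw [if_neg h, if_neg h, mul_zero]
    have e2 : ∑ e ∈ N.A.filter (fun e => e.2 = i), chiInd N L a (vsf a) e
        = (if a ∈ L then 1 else -1) * ∑ e ∈ N.A, (if e.2 = i then chiList (vsf a) e else 0) := by
      rw [Finset.mul_sum, Finset.sum_filter]
      apply Finset.sum_congr rfl
      intro e he
      by_cases h : e.2 = i
      · rw [if_pos h, if_pos h, hχ_on_A a e he]
      · rw [if_neg h, if_neg h, mul_zero]
    rw [e1, e2, ← mul_sub]
    have e3 : (∑ e ∈ N.A, (if e.1 = i then chiList (vsf a) e else 0))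
        - (∑ e ∈ N.A, (if e.2 = i then chiList (vsf a) e else 0))
        = ∑ e ∈ N.A, chiList (vsf a) e •
            ((if e.1 = i then (1:ℤ) else 0) - (if e.2 = i then 1 else 0)) := by
      rw [← Finset.sum_sub_distrib]
      apply Finset.sum_congr rfl
      intro e he
      rw [smul_eq_mul]
      split_ifs <;> ring
    rw [e3, hsum, mul_zero]
  have hcostχ : ∀ a ∈ zeroRedNonTree N T y,
      ∑ e ∈ N.A, (chiInd N L a (vsf a) e : ℝ) * N.c e = 0 := by
    intro a ha
    obtain ⟨haA, haT, hared⟩ := hSmem a ha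
    have hnd := (hvs a ha).1
    have h3 := cfacts_three_le hAnti hTA haA haT (hvs a ha)
    have hsum := sum_chiList_smul (M := ℝ) N.A (vsf a) (cyclePairs_nodup hnd)
        (fun p hp => cyclePairs_no_swap hnd h3 hp)
        (cfacts_pairs_mem_A hAnti hTA haA haT (hvs a ha)) hAnti
        (fun e => y e.1 - y e.2)
        (by intro e; simp only [Prod.fst_swap, Prod.snd_swap]; ring)
    have htel : ((cyclePairs (vsf a)).map (fun e : V × V => y e.1 - y e.2)).sum = 0 :=
      cyclePairs_telescope (vsf a) y
    rw [htel] at hsum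
    have hdec : ∀ e ∈ N.A, (chiInd N L a (vsf a) e : ℝ) * N.c e
        = (chiInd N L a (vsf a) e : ℝ) * N.redCost y e
          - (if a ∈ L then (1:ℝ) else -1) * (chiList (vsf a) e • (y e.1 - y e.2)) := by
      intro e he
      rw [hχ_on_A a e he, Network.redCost, zsmul_eq_mul]
      split_ifs <;> push_cast <;> ring
    rw [Finset.sum_congr rfl hdec, Finset.sum_sub_distrib, ← Finset.mul_sum, hsum, mul_zero,
      sub_zero]
    apply Finset.sum_eq_zero
    intro e he
    by_cases hc : chiList (vsf a) e = 0
    · rw [hχ_on_A a e he, hc]; simp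
    · rcases cfacts_support hAnti hTA haA haT (hvs a ha) e he hc with rfl | hT
      · rw [hared, mul_zero]
      · rw [hyT e hT, mul_zero]
  have hcap_bdd : ∀ a : V × V, BddBelow {x : ℤ | ∃ e ∈ N.A, chiInd N L a (vsf a) e ≠ 0 ∧
      x = if chiInd N L a (vsf a) e = 1 then N.u e - f e else f e} := by
    intro a
    refine ⟨0, ?_⟩
    rintro x ⟨e, he, hne, rfl⟩
    have h1 := hfeas.1 e he
    have h2 := hl e he
    split_ifs <;> omega
  have hcap_nonneg : ∀ a ∈ zeroRedNonTree N T y,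
      0 ≤ freeCap N f (chiInd N L a (vsf a)) := by
    intro a ha
    rw [freeCap]
    apply le_csInf
    · exact ⟨_, a, (hSmem a ha).1, hχa_ne a ha, rfl⟩
    · rintro x ⟨e, he, hne, rfl⟩
      have h1 := hfeas.1 e he
      have h2 := hl e he
      split_ifs <;> omega
  have hcap_le1 : ∀ (a : V × V), ∀ e ∈ N.A, chiInd N L a (vsf a) e = 1 →
      freeCap N f (chiInd N L a (vsf a)) ≤ N.u e - f e := by
    intro a e he h1
    rw [freeCap]
    exact csInf_le (hcap_bdd a) ⟨e, he, by rw [h1]; norm_num, by rw [if_pos h1]⟩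
  have hcap_le2 : ∀ (a : V × V), ∀ e ∈ N.A, chiInd N L a (vsf a) e = -1 →
      freeCap N f (chiInd N L a (vsf a)) ≤ f e := by
    intro a e he h1
    rw [freeCap]
    refine csInf_le (hcap_bdd a) ⟨e, he, by rw [h1]; norm_num, ?_⟩
    rw [if_neg (by rw [h1]; norm_num)]
  have part1 : ∀ a ∈ zeroRedNonTree N T y, ∀ lam : ℤ,
      1 ≤ lam → lam ≤ freeCap N f (chiInd N L a (vsf a)) →
      N.Optimal (fun e => f e + lam * chiInd N L a (vsf a) e) ∧
        (fun e => f e + lam * chiInd N L a (vsf a) e) ≠ f := by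
    intro a ha lam hlam1 hlam2
    obtain ⟨haA, haT, hared⟩ := hSmem a ha
    have hgfeas : N.Feasible (fun e => f e + lam * chiInd N L a (vsf a) e) := by
      refine ⟨?_, ?_, ?_⟩
      · intro e he
        dsimp only
        have h1 := hfeas.1 e he
        have h2 := hl e he
        rcases hχval a e with h | h | h
        · rw [h, mul_zero, add_zero]; exact h1
        · have hle := hcap_le1 a e he h
          rw [h, mul_one]
          constructor <;> omega
        · have hle := hcap_le2 a e he h
          rw [h, mul_neg_one]
          constructor <;> omega
      · intro e he
        dsimp only
        rw [hfeas.2.1 e he, hχ_notA a e he, mul_zero, add_zero]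
      · intro i
        have hb := hfeas.2.2 i
        have hc := hbalχ a ha i
        rw [Finset.sum_add_distrib, Finset.sum_add_distrib, ← Finset.mul_sum, ← Finset.mul_sum]
        linear_combination hb + lam * hc
    have hcosteq : N.cost (fun e => f e + lam * chiInd N L a (vsf a) e) = N.cost f := by
      rw [Network.cost, Network.cost]
      have hterm : ∀ e ∈ N.A, N.c e * ((f e + lam * chiInd N L a (vsf a) e : ℤ) : ℝ)
          = N.c e * (f e : ℝ) + (lam : ℝ) * ((chiInd N L a (vsf a) e : ℝ) * N.c e) := by
        intro e he; push_cast; ring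
      rw [Finset.sum_congr rfl hterm, Finset.sum_add_distrib, ← Finset.mul_sum, hcostχ a ha,
        mul_zero, add_zero]
    refine ⟨⟨hgfeas, fun g hg => ?_⟩, ?_⟩
    · rw [hcosteq]; exact hopt.2 g hg
    · intro hEq
      have heval : f a + lam * chiInd N L a (vsf a) a = f a := congrFun hEq a
      rcases hχval a a with h | h | h
      · exact hχa_ne a ha h
      · rw [h, mul_one] at heval; omega
      · rw [h, mul_neg_one] at heval; omega
  have hχ_other : ∀ a ∈ zeroRedNonTree N T y, ∀ a' ∈ zeroRedNonTree N T y, a ≠ a' →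
      chiInd N L a' (vsf a') a = 0 := by
    intro a ha a' ha' hne
    obtain ⟨haA, haT, _⟩ := hSmem a ha
    obtain ⟨ha'A, ha'T, _⟩ := hSmem a' ha'
    rw [hχ_on_A a' a haA]
    have h0 : chiList (vsf a') a = 0 := by
      apply chiList_eq_zero
      · intro hmem
        rcases (hvs a' ha').2.2 a hmem with h | h | h
        · exact hne h
        · exact haT h
        · exact hAnti a haA (hTA h)
      · intro hmem
        rcases (hvs a' ha').2.2 _ hmem with h | h | h
        · exact hAnti a haA (by rw [h]; exact ha'A)
        · exact hAnti a haA (hTA h)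
        · rw [Prod.swap_swap] at h; exact haT h
    rw [h0, mul_zero]
  have part2 : ∀ a ∈ zeroRedNonTree N T y, ∀ a' ∈ zeroRedNonTree N T y, ∀ lam lam' : ℤ,
      1 ≤ lam → lam ≤ freeCap N f (chiInd N L a (vsf a)) →
      1 ≤ lam' → lam' ≤ freeCap N f (chiInd N L a' (vsf a')) →
      (a, lam) ≠ (a', lam') →
      (fun e => f e + lam * chiInd N L a (vsf a) e) ≠
        fun e => f e + lam' * chiInd N L a' (vsf a') e := by
    intro a ha a' ha' lam lam' h1 h2 h3 h4 hne hEq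
    by_cases haa : a = a'
    · subst haa
      have hlam : lam ≠ lam' := fun h => hne (by rw [h])
      have heval : f a + lam * chiInd N L a (vsf a) a
          = f a + lam' * chiInd N L a (vsf a) a := congrFun hEq a
      rcases hχval a a with h | h | h
      · exact hχa_ne a ha h
      · rw [h, mul_one, mul_one] at heval; omega
      · rw [h, mul_neg_one, mul_neg_one] at heval; omega
    · have heval : f a + lam * chiInd N L a (vsf a) a
          = f a + lam' * chiInd N L a' (vsf a') a := congrFun hEq a
      rw [hχ_other a ha a' ha' haa, mul_zero, add_zero] at heval
      rcases hχval a a with h | h | h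
      · exact hχa_ne a ha h
      · rw [h, mul_one] at heval; omega
      · rw [h, mul_neg_one] at heval; omega
  refine ⟨part1, part2, ?_⟩
  have hfin : {g : V × V → ℤ | N.Optimal g}.Finite := by
    have hsub : {g : V × V → ℤ | N.Optimal g} ⊆
        Set.pi Set.univ (fun e => Set.Icc (0:ℤ) (max (N.u e) 0)) := by
      intro g hg e _
      by_cases he : e ∈ N.A
      · have h1 := hg.1.1 e he
        have h2 := hl e he
        exact ⟨by omega, le_trans h1.2 (le_max_left _ _)⟩
      · rw [hg.1.2.1 e he]
        exact ⟨le_refl 0, le_max_right _ _⟩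
    exact (Set.Finite.pi (fun e => Set.finite_Icc _ _)).subset hsub
  set Pfin : Finset ((V × V) × ℤ) := (zeroRedNonTree N T y).biUnion
      (fun a => (Finset.Icc 1 (freeCap N f (chiInd N L a (vsf a)))).image
        (fun lam => (a, lam))) with hPfin
  have hPmem : ∀ q : (V × V) × ℤ, q ∈ Pfin ↔ q.1 ∈ zeroRedNonTree N T y ∧
      1 ≤ q.2 ∧ q.2 ≤ freeCap N f (chiInd N L q.1 (vsf q.1)) := by
    intro q
    simp only [hPfin, Finset.mem_biUnion, Finset.mem_image, Finset.mem_Icc]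
    constructor
    · rintro ⟨a, ha, lam, ⟨hl1, hl2⟩, rfl⟩
      exact ⟨ha, hl1, hl2⟩
    · rintro ⟨h1, h2, h3⟩
      exact ⟨q.1, h1, q.2, ⟨h2, h3⟩, rfl⟩
  have hcard1 : Pfin.card = ∑ a ∈ zeroRedNonTree N T y,
      (freeCap N f (chiInd N L a (vsf a))).toNat := by
    rw [hPfin, Finset.card_biUnion]
    · apply Finset.sum_congr rfl
      intro a ha
      rw [Finset.card_image_of_injective _ (fun x y h => (Prod.mk.injEq _ _ _ _ ▸ h : _ ∧ _).2),
        Int.card_Icc]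
      congr 1
      ring
    · intro x hx z hz hxz
      rw [Function.onFun, Finset.disjoint_left]
      rintro ⟨b, lam⟩ hmem1 hmem2
      simp only [Finset.mem_image, Finset.mem_Icc, Prod.mk.injEq] at hmem1 hmem2
      obtain ⟨l1, _, hx1, _⟩ := hmem1
      obtain ⟨l2, _, hz1, _⟩ := hmem2
      exact hxz (hx1.trans hz1.symm)
  have hle : Pfin.card ≤ hfin.toFinset.card := by
    apply Finset.card_le_card_of_injOn
      (fun q => fun e => f e + q.2 * chiInd N L q.1 (vsf q.1) e)
    · intro q hq
      rw [Finset.mem_coe, Set.Finite.mem_toFinset]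
      obtain ⟨h1, h2, h3⟩ := (hPmem q).mp hq
      exact (part1 q.1 h1 q.2 h2 h3).1
    · intro q hq q' hq' hEq
      rw [Finset.mem_coe] at hq hq'
      obtain ⟨h1, h2, h3⟩ := (hPmem q).mp hq
      obtain ⟨h1', h2', h3'⟩ := (hPmem q').mp hq'
      by_contra hne
      exact part2 q.1 h1 q'.1 h1' q.2 q'.2 h2 h3 h2' h3'
        (by simpa using hne) hEq
  calc (∑ a ∈ zeroRedNonTree N T y, freeCap N f (chiInd N L a (vsf a)))
      = ∑ a ∈ zeroRedNonTree N T y, ((freeCap N f (chiInd N L a (vsf a))).toNat : ℤ) :=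
        Finset.sum_congr rfl (fun a ha => (Int.toNat_of_nonneg (hcap_nonneg a ha)).symm)
    _ = ((∑ a ∈ zeroRedNonTree N T y, (freeCap N f (chiInd N L a (vsf a))).toNat : ℕ) : ℤ) := by
        push_cast; rfl
    _ = (Pfin.card : ℤ) := by rw [hcard1]
    _ ≤ (hfin.toFinset.card : ℤ) := by exact_mod_cast hle
    _ = ({g : V × V → ℤ | N.Optimal g}.ncard : ℤ) := by
        rw [Set.ncard_eq_toFinset_card _ hfin]
end
end
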